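/- Let r ≥ 2, c with 1 ≤ c ≤ r − 1, positive integers k_1, ..., k_c, and real numbers d, y_1, ..., y_c. Define β(h) := ∑_{I ⊆ {1,...,c}} (−1)^{|I|} C(h − k_I + r − 1, r − 1)·(k_I·d − y_I·r)/r for integers h ≥ 0 (binomials with negative top are zero), where k_I = ∑_{i∈I}k_i, y_I = ∑_{i∈I}y_i. Then lim_{h→∞} β(h)·(r−c)!/h^{r−c} = −(c·(∏_{i=1}^c k_i)·d − ∑_{i=1}^c (∏_{j≠i} k_j)·y_i·r)/r. -/

import Mathlib

open Finset Filter

/-- Binomial coefficient with integer top, zero for negative top. -/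
def ichoose (n : ℤ) (m : ℕ) : ℤ := if n < 0 then 0 else ((n.toNat).choose m : ℤ)

open Polynomial


lemma nat_choose_prod (m n : ℕ) : (m+n).choose n * n.factorial = ∏ t ∈ Finset.range n, (m + t + 1) := by
  have h1 : (m+n).descFactorial n = ∏ t ∈ Finset.range n, (m + t + 1) := by
    rw [Nat.descFactorial_eq_prod_range, ← Finset.prod_range_reflect]
    exact Finset.prod_congr rfl fun j hj => by
      simp only [Finset.mem_range] at hj; omega
  rw [← h1, Nat.descFactorial_eq_factorial_mul_choose, Nat.mul_comm]

lemma ichoose_cast (m : ℤ) (n : ℕ) (hm : 0 ≤ m) :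
    (ichoose (m + n) n : ℝ) = (∏ t ∈ Finset.range n, ((m:ℝ) + t + 1)) / n.factorial := by
  have h0 : ¬ (m + (n:ℤ) < 0) := by omega
  rw [ichoose, if_neg h0]
  have h2 : (m + (n:ℤ)).toNat = m.toNat + n := by omega
  rw [h2]
  have := nat_choose_prod m.toNat n
  have hcast : ((m.toNat + n).choose n : ℝ) * n.factorial = ∏ t ∈ Finset.range n, ((m:ℝ) + t + 1) := by
    have := congrArg (fun x : ℕ => (x : ℝ)) this
    push_cast at this
    rw [this]
    exact Finset.prod_congr rfl fun t _ => by
      congr 1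
      congr 1
      exact_mod_cast congrArg (fun z : ℤ => (z:ℝ)) (Int.toNat_of_nonneg hm)
  field_simp [Nat.factorial_ne_zero] at hcast ⊢
  push_cast
  linarith [hcast]

lemma hasse_top (q : Polynomial ℝ) (D e : ℕ) (hq : q.natDegree ≤ D) (he : D ≤ e) :
    q.hasseDeriv e = C (q.coeff e) := by
  ext n
  rw [Polynomial.hasseDeriv_coeff, Polynomial.coeff_C]
  rcases Nat.eq_zero_or_pos n with rfl | hn
  · simp
  · rw [if_neg (by omega)]
    rw [Polynomial.coeff_eq_zero_of_natDegree_lt (by omega), mul_zero]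

lemma hasse_sub (q : Polynomial ℝ) (D : ℕ) (hD : 1 ≤ D) (hq : q.natDegree ≤ D) :
    q.hasseDeriv (D - 1) = C (q.coeff (D-1)) + C ((D:ℝ) * q.coeff D) * X := by
  ext n
  rw [Polynomial.hasseDeriv_coeff]
  match n with
  | 0 => simp
  | 1 =>
    simp only [Polynomial.coeff_add, Polynomial.coeff_C, if_neg one_ne_zero,
      Polynomial.coeff_C_mul, Polynomial.coeff_X_one, mul_one, zero_add]
    have h1 : 1 + (D - 1) = D := by omega
    rw [h1]
    have : D.choose (D-1) = D := by
      rw [Nat.choose_symm_of_eq_add (by omega : D = (D-1) + 1), Nat.choose_one_right]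
    rw [this]
  | (n+2) =>
    rw [Polynomial.coeff_eq_zero_of_natDegree_lt (by omega), mul_zero]
    simp only [Polynomial.coeff_add, Polynomial.coeff_C, if_neg (by omega : ¬ n+2 = 0),
      Polynomial.coeff_C_mul]
    rw [Polynomial.coeff_X]
    rw [if_neg (by omega)]
    simp

lemma comp_shift (q : Polynomial ℝ) (a : ℝ) (D : ℕ) (hD : 1 ≤ D) (hq : q.natDegree ≤ D) :
    (q - q.comp (X - C a)).natDegree ≤ D - 1 ∧
      (q - q.comp (X - C a)).coeff (D-1) = a * D * q.coeff D := by
  have hcomp : q.comp (X - C a) = Polynomial.taylor (-a) q := by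
    rw [Polynomial.taylor_apply, map_neg, sub_eq_add_neg]
  constructor
  · rw [Polynomial.natDegree_le_iff_coeff_eq_zero]
    intro N hN
    have hDN : D ≤ N := by omega
    rw [Polynomial.coeff_sub, hcomp, Polynomial.taylor_coeff, hasse_top q D N hq hDN]
    simp
  · rw [Polynomial.coeff_sub, hcomp, Polynomial.taylor_coeff, hasse_sub q D hD hq]
    simp only [Polynomial.eval_add, Polynomial.eval_C, Polynomial.eval_mul, Polynomial.eval_X]
    ring

lemma poly_tendsto (p : Polynomial ℝ) (D : ℕ) (hp : p.natDegree ≤ D) :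
    Tendsto (fun h : ℕ => p.eval (h:ℝ) / (h:ℝ)^D) atTop (nhds (p.coeff D)) := by
  have key : ∀ i ∈ Finset.range (D+1),
      Tendsto (fun h : ℕ => p.coeff i * (h:ℝ)^i / (h:ℝ)^D) atTop
        (nhds (if i = D then p.coeff i else 0)) := by
    intro i hi
    rw [Finset.mem_range, Nat.lt_succ_iff] at hi
    rcases eq_or_lt_of_le hi with rfl | hiD
    · rw [if_pos rfl]
      apply Tendsto.congr' _ (tendsto_const_nhds (x := p.coeff i))
      filter_upwards [eventually_ge_atTop 1] with h hh
      have : (h:ℝ) ^ i ≠ 0 := by positivity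
      field_simp
    · rw [if_neg (by omega)]
      have hbase : Tendsto (fun h : ℕ => ((h:ℝ)^(D-i))⁻¹) atTop (nhds 0) := by
        apply Tendsto.inv_tendsto_atTop
        exact (tendsto_pow_atTop (by omega : D - i ≠ 0)).comp tendsto_natCast_atTop_atTop
      have := hbase.const_mul (p.coeff i)
      rw [mul_zero] at this
      apply Tendsto.congr' _ this
      filter_upwards [eventually_ge_atTop 1] with h hh
      have hh0 : (h:ℝ) ≠ 0 := by positivity
      have hsplit : (h:ℝ)^D = (h:ℝ)^i * (h:ℝ)^(D-i) := by
        rw [← pow_add]; congr 1; omega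
      rw [hsplit, mul_comm (p.coeff i), mul_div_assoc, ← div_div,
        div_self (pow_ne_zero _ hh0), one_div]
      exact mul_comm _ _
  have hsum := tendsto_finset_sum (Finset.range (D+1)) key
  rw [Finset.sum_ite_eq' (Finset.range (D+1)) D (fun i => p.coeff i),
    if_pos (Finset.mem_range.mpr (Nat.lt_succ_self D))] at hsum
  apply Tendsto.congr _ hsum
  intro h
  rw [Polynomial.eval_eq_sum_range' (Nat.lt_succ_of_le hp), Finset.sum_div]




lemma core {ι : Type*} [DecidableEq ι] (a : ι → ℕ) (n : ℕ) :
    ∀ s : Finset ι, s.card ≤ n → ∀ b : ℕ,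
    ∃ p : Polynomial ℝ, p.natDegree ≤ n - s.card ∧
      p.coeff (n - s.card) = (∏ j ∈ s, (a j : ℝ)) / (Nat.factorial (n - s.card)) ∧
      ∀ h : ℤ, (b : ℤ) + ∑ j ∈ s, (a j : ℤ) ≤ h →
        ∑ J ∈ s.powerset, (-1:ℝ)^J.card * (ichoose (h - b - (∑ j ∈ J, (a j : ℤ)) + n) n : ℝ)
          = p.eval (h : ℝ) := by
  intro s
  induction s using Finset.induction_on with
  | empty =>
    intro _ b
    have hQm : (∏ t ∈ Finset.range n, (X + C ((t:ℝ) + 1 - b))).Monic :=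
      Polynomial.monic_prod_of_monic _ _ fun t _ => Polynomial.monic_X_add_C _
    have hQD : (∏ t ∈ Finset.range n, (X + C ((t:ℝ) + 1 - b))).natDegree = n := by
      rw [Polynomial.natDegree_prod _ _ fun t _ => Polynomial.X_add_C_ne_zero _]
      simp only [Polynomial.natDegree_X_add_C, Finset.sum_const, smul_eq_mul, mul_one, Finset.card_range]
    refine ⟨C ((n.factorial:ℝ))⁻¹ * ∏ t ∈ Finset.range n, (X + C ((t:ℝ) + 1 - b)), ?_, ?_, ?_⟩
    · simp only [Finset.card_empty, Nat.sub_zero]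
      exact (Polynomial.natDegree_C_mul_le _ _).trans hQD.le
    · simp only [Finset.card_empty, Nat.sub_zero, Finset.prod_empty]
      rw [Polynomial.coeff_C_mul]
      have := hQm.coeff_natDegree
      rw [hQD] at this
      rw [this, mul_one, one_div]
    · intro h hh
      simp only [Finset.sum_empty, Finset.powerset_empty, Finset.sum_singleton,
        Finset.card_empty, pow_zero, one_mul, sub_zero, add_zero] at hh ⊢
      have hbm : (0:ℤ) ≤ h - b := by omega
      have harg : h - (b:ℤ) + n = (h - b) + n := by ring
      rw [harg, ichoose_cast _ n hbm]
      rw [Polynomial.eval_mul, Polynomial.eval_C, Polynomial.eval_prod]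
      simp only [Polynomial.eval_add, Polynomial.eval_X, Polynomial.eval_C]
      rw [div_eq_inv_mul]
      congr 1
      push_cast
      exact Finset.prod_congr rfl fun t _ => by ring
  | insert i s hi ih =>
    intro hcard b
    have hc1 : s.card + 1 ≤ n := by rwa [Finset.card_insert_of_notMem hi] at hcard
    obtain ⟨q, hq1, hq2, hq3⟩ := ih (by omega) b
    set D := n - s.card with hDdef
    clear_value D
    have hD1 : 1 ≤ D := by omega
    have hDD : n - (insert i s).card = D - 1 := by
      rw [Finset.card_insert_of_notMem hi]; omega
    obtain ⟨hp1, hp2⟩ := comp_shift q ((a i : ℝ)) D hD1 hq1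
    refine ⟨q - q.comp (X - C ((a i : ℝ))), by rw [hDD]; exact hp1, ?_, ?_⟩
    · rw [hDD, hp2, hq2, Finset.prod_insert hi]
      obtain ⟨D', rfl⟩ : ∃ D', D = D' + 1 := ⟨D - 1, by omega⟩
      simp only [Nat.add_sub_cancel, Nat.factorial_succ]
      have h1 : ((D'.factorial : ℝ)) ≠ 0 := by positivity
      have h2 : ((D' + 1 : ℕ) : ℝ) ≠ 0 := by positivity
      field_simp
      push_cast
      ring
    · intro h hh
      rw [Finset.sum_insert hi] at hh
      have hai : (0:ℤ) ≤ (a i : ℤ) := by positivity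
      have hsum0 : (0:ℤ) ≤ ∑ j ∈ s, (a j : ℤ) := by positivity
      rw [Finset.sum_powerset_insert hi]
      have e1 : ∑ J ∈ s.powerset, (-1:ℝ)^J.card * (ichoose (h - b - (∑ j ∈ J, (a j : ℤ)) + n) n : ℝ)
          = q.eval (h:ℝ) := hq3 h (by linarith)
      have e2 : ∑ J ∈ s.powerset,
            (-1:ℝ)^(insert i J).card * (ichoose (h - b - (∑ j ∈ insert i J, (a j : ℤ)) + n) n : ℝ)
          = - q.eval ((h - (a i : ℤ) : ℤ) : ℝ) := by
        have := hq3 (h - (a i : ℤ)) (by linarith)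
        rw [← this, ← Finset.sum_neg_distrib]
        refine Finset.sum_congr rfl fun J hJ => ?_
        have hiJ : i ∉ J := fun hmem => hi (Finset.mem_powerset.mp hJ hmem)
        rw [Finset.card_insert_of_notMem hiJ, Finset.sum_insert hiJ, pow_succ]
        have harg : h - (b:ℤ) - ((a i : ℤ) + ∑ j ∈ J, (a j : ℤ)) + n
            = h - (a i : ℤ) - b - (∑ j ∈ J, (a j : ℤ)) + n := by ring
        rw [harg]
        ring
      rw [e1, e2]
      rw [Polynomial.eval_sub, Polynomial.eval_comp]
      simp only [Polynomial.eval_sub, Polynomial.eval_X, Polynomial.eval_C]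
      push_cast
      ring

/-- Asymptotic Lemma 3.10: the correction term `β(h)` in `deg f_* O_X(h)` has leading
asymptotic coefficient `-α/r` with `α = c·∏k_i·d - ∑(∏_{j≠i}k_j)·y_i·r`. -/



theorem stmt_15 (r c : ℕ) (hr : 2 ≤ r) (hc1 : 1 ≤ c) (hc2 : c ≤ r - 1)
    (k : Fin c → ℕ) (hk : ∀ i, 0 < k i) (d : ℝ) (y : Fin c → ℝ) :
    Tendsto
      (fun h : ℕ =>
        (∑ I ∈ (Finset.univ : Finset (Fin c)).powerset,
            (-1 : ℝ) ^ I.card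
              * (ichoose ((h : ℤ) - (∑ i ∈ I, (k i : ℤ)) + r - 1) (r - 1) : ℝ)
              * ((∑ i ∈ I, (k i : ℝ)) * d - (∑ i ∈ I, y i) * (r : ℝ)) / (r : ℝ))
          * (Nat.factorial (r - c) : ℝ) / (h : ℝ) ^ (r - c))
      atTop
      (nhds (-(((c : ℝ) * (∏ i, (k i : ℝ)) * d
          - (∑ i, (∏ j ∈ Finset.univ.erase i, (k j : ℝ)) * y i) * (r : ℝ)) / (r : ℝ)))) := by
  set w : Fin c → ℝ := fun i => (k i : ℝ) * d - y i * (r:ℝ) with hw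
  set D := r - c with hDdef
  have hcard_erase : ∀ i : Fin c, ((Finset.univ : Finset (Fin c)).erase i).card = c - 1 :=
    fun i => by rw [Finset.card_erase_of_mem (Finset.mem_univ i), Finset.card_univ, Fintype.card_fin]
  have hDeq : (r - 1) - (c - 1) = D := by omega
  have hcore := fun i : Fin c => core k (r-1) ((Finset.univ : Finset (Fin c)).erase i)
    (by rw [hcard_erase i]; omega) (k i)
  choose p hp1 hp2 hp3 using hcore
  simp only [hcard_erase, hDeq] at hp1 hp2
  set P : Polynomial ℝ := ∑ i : Fin c, C (-(w i)/(r:ℝ)) * p i with hP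
  have hPdeg : P.natDegree ≤ D :=
    Polynomial.natDegree_sum_le_of_forall_le _ _ fun i _ =>
      (Polynomial.natDegree_C_mul_le _ _).trans (hp1 i)
  have hPcoeff : P.coeff D
      = ∑ i : Fin c, (-(w i)/(r:ℝ)) * ((∏ j ∈ Finset.univ.erase i, (k j:ℝ)) / (D.factorial : ℝ)) := by
    rw [hP, Polynomial.finset_sum_coeff]
    exact Finset.sum_congr rfl fun i _ => by rw [Polynomial.coeff_C_mul, hp2 i]
  have hr0 : (r:ℝ) ≠ 0 := by positivity
  have hf0 : ((D.factorial : ℕ) : ℝ) ≠ 0 := by positivity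
  -- eventual equality of the function with P.eval
  have hbig : ∀ h : ℕ, (∑ j, k j) ≤ h →
      (∑ I ∈ (Finset.univ : Finset (Fin c)).powerset,
            (-1 : ℝ) ^ I.card
              * (ichoose ((h : ℤ) - (∑ i ∈ I, (k i : ℤ)) + r - 1) (r - 1) : ℝ)
              * ((∑ i ∈ I, (k i : ℝ)) * d - (∑ i ∈ I, y i) * (r : ℝ)) / (r : ℝ))
        = P.eval (h:ℝ) := by
    intro h hh
    have step1 : ∀ I ∈ (Finset.univ : Finset (Fin c)).powerset,
        (-1 : ℝ) ^ I.card
              * (ichoose ((h : ℤ) - (∑ i ∈ I, (k i : ℤ)) + r - 1) (r - 1) : ℝ)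
              * ((∑ i ∈ I, (k i : ℝ)) * d - (∑ i ∈ I, y i) * (r : ℝ)) / (r : ℝ)
          = ∑ i : Fin c, (if i ∈ I then
              (-1 : ℝ) ^ I.card
              * (ichoose ((h : ℤ) - (∑ i ∈ I, (k i : ℤ)) + r - 1) (r - 1) : ℝ) * w i / r else 0) := by
      intro I _
      rw [Finset.sum_ite_mem Finset.univ I, Finset.univ_inter, ← Finset.sum_div,
        ← Finset.mul_sum]
      have : ∑ i ∈ I, w i = (∑ i ∈ I, (k i : ℝ)) * d - (∑ i ∈ I, y i) * (r : ℝ) := by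
        rw [hw]; rw [Finset.sum_sub_distrib, Finset.sum_mul, Finset.sum_mul]
      rw [this]
    rw [Finset.sum_congr rfl step1, Finset.sum_comm]
    rw [hP, Polynomial.eval_finset_sum]
    refine Finset.sum_congr rfl fun i _ => ?_
    rw [Polynomial.eval_mul, Polynomial.eval_C]
    -- now compute the inner sum over I for a fixed i
    rw [show (Finset.univ : Finset (Fin c)) = insert i (Finset.univ.erase i) from
      (Finset.insert_erase (Finset.mem_univ i)).symm]
    rw [Finset.sum_powerset_insert (Finset.notMem_erase i Finset.univ)]
    rw [Finset.sum_eq_zero (fun J hJ => by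
      have hiJ : i ∉ J := fun hmem =>
        (Finset.notMem_erase i Finset.univ) (Finset.mem_powerset.mp hJ hmem)
      rw [if_neg hiJ]), zero_add]
    have harg : ∀ J ∈ (Finset.univ.erase i).powerset,
        (if i ∈ insert i J then
            (-1 : ℝ) ^ (insert i J).card
            * (ichoose ((h : ℤ) - (∑ j ∈ insert i J, (k j : ℤ)) + r - 1) (r - 1) : ℝ)
            * w i / r else 0)
        = (-(w i)/(r:ℝ)) * ((-1:ℝ)^J.card
            * (ichoose ((h:ℤ) - (k i) - (∑ j ∈ J, (k j : ℤ)) + (r-1:ℕ)) (r-1) : ℝ)) := by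
      intro J hJ
      have hiJ : i ∉ J := fun hmem =>
        (Finset.notMem_erase i Finset.univ) (Finset.mem_powerset.mp hJ hmem)
      rw [if_pos (Finset.mem_insert_self i J), Finset.card_insert_of_notMem hiJ,
        Finset.sum_insert hiJ, pow_succ]
      have : (h : ℤ) - ((k i : ℤ) + ∑ j ∈ J, (k j : ℤ)) + r - 1
          = (h:ℤ) - (k i) - (∑ j ∈ J, (k j : ℤ)) + ((r-1:ℕ):ℤ) := by
        push_cast [Nat.cast_sub (by omega : 1 ≤ r)]; ring
      rw [this]
      ring
    rw [Finset.sum_congr rfl harg, ← Finset.mul_sum]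
    congr 1
    apply hp3
    have : (k i : ℤ) + ∑ j ∈ Finset.univ.erase i, (k j : ℤ) = ∑ j, (k j : ℤ) :=
      Finset.add_sum_erase Finset.univ (fun j => (k j : ℤ)) (Finset.mem_univ i)
    rw [this]
    exact_mod_cast Nat.cast_le.mpr hh
  -- limit value computation
  have hck : ((c:ℝ)) * ∏ j, (k j:ℝ) = ∑ i, (k i:ℝ) * ∏ j ∈ Finset.univ.erase i, (k j:ℝ) := by
    rw [Finset.sum_congr rfl fun i _ =>
      (Finset.mul_prod_erase Finset.univ (fun j => (k j:ℝ)) (Finset.mem_univ i))]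
    rw [Finset.sum_const, Finset.card_univ, Fintype.card_fin, nsmul_eq_mul]
  have hval : P.coeff D * (D.factorial : ℝ)
      = -(((c : ℝ) * (∏ i, (k i : ℝ)) * d
          - (∑ i, (∏ j ∈ Finset.univ.erase i, (k j : ℝ)) * y i) * (r : ℝ)) / (r : ℝ)) := by
    rw [hPcoeff, Finset.sum_mul]
    have : ∀ i : Fin c, (-(w i)/(r:ℝ)) * ((∏ j ∈ Finset.univ.erase i, (k j:ℝ)) / (D.factorial : ℝ))
        * (D.factorial : ℝ) = -(w i) * (∏ j ∈ Finset.univ.erase i, (k j:ℝ)) / r := by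
      intro i; field_simp
    rw [Finset.sum_congr rfl fun i _ => this i, ← Finset.sum_div, ← neg_div]
    congr 1
    calc ∑ i, -(w i) * (∏ j ∈ Finset.univ.erase i, (k j:ℝ))
        = ∑ i, (((∏ j ∈ Finset.univ.erase i, (k j:ℝ)) * y i) * (r:ℝ)
            - ((k i:ℝ) * ∏ j ∈ Finset.univ.erase i, (k j:ℝ)) * d) :=
          Finset.sum_congr rfl fun i _ => by rw [hw]; ring
      _ = (∑ i, (∏ j ∈ Finset.univ.erase i, (k j:ℝ)) * y i) * (r:ℝ)
            - (∑ i, (k i:ℝ) * ∏ j ∈ Finset.univ.erase i, (k j:ℝ)) * d := by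
          rw [Finset.sum_sub_distrib, ← Finset.sum_mul, ← Finset.sum_mul]
      _ = -(((c : ℝ) * (∏ i, (k i : ℝ)) * d
          - (∑ i, (∏ j ∈ Finset.univ.erase i, (k j : ℝ)) * y i) * (r : ℝ))) := by
          rw [hck]; ring
  rw [← hval]
  have hlim := (poly_tendsto P D hPdeg).mul_const ((D.factorial : ℕ) : ℝ)
  apply Tendsto.congr' _ hlim
  filter_upwards [eventually_ge_atTop (∑ j, k j)] with h hh
  rw [hbig h hh]
  ring
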